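/- arXiv:1705.08331 — 2 statements merged into one kernel-verified Lean document; each statement's English description precedes it below -/
import Mathlib

section
/- Let α ∈ (0,1/2) and let t(p) be the p-th quantile of the t-distribution with q degrees of freedom. For any spending function s̃(β) = g^{-1}(2wσ̃β/τ̃²) (with g(s) = Φ^{-1}(αs) − Φ^{-1}(α(1−s)), w, σ̃ > 0, τ̃² > 0), the width of the FAB interval C_{s̃}(β̂, σ̂) with endpoints β̄ and β̲ solving β̄ − wσ̂ t(1 − α s̃(β̄)) = β̂ and β̲ − wσ̂ t(α(1 − s̃(β̲))) = β̂ satisfies |C_{s̃}| = β̄ − β̲ < |β̂| + wσ̂·(|t(α/2)| + |t(1−α/2)|). -/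
open MeasureTheory ProbabilityTheory Real Set Matrix

noncomputable section

/-- pdf of the Student t distribution with `q` degrees of freedom. -/
def tPdf (q : ℝ) (x : ℝ) : ℝ :=
  (Real.Gamma ((q + 1) / 2) / (Real.sqrt (q * Real.pi) * Real.Gamma (q / 2))) *
    (1 + x ^ 2 / q) ^ (-(q + 1) / 2)

/-- CDF of the Student t distribution with `q` degrees of freedom. -/
def tCdf (q : ℝ) (x : ℝ) : ℝ := ∫ t in Set.Iic x, tPdf q t

/-- `p`-th quantile of the Student t distribution with `q` degrees of freedom. -/
def tQuantile (q : ℝ) (p : ℝ) : ℝ := sInf {x : ℝ | p ≤ tCdf q x}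

/-- standard normal CDF -/
def Phi (x : ℝ) : ℝ := ((gaussianReal 0 1) (Set.Iic x)).toReal

/-- standard normal quantile function -/
def PhiInv (p : ℝ) : ℝ := sInf {x : ℝ | p ≤ Phi x}

/-- the function `g(s) = Φ⁻¹(αs) − Φ⁻¹(α(1−s))` -/
def gfun (α : ℝ) (s : ℝ) : ℝ := PhiInv (α * s) - PhiInv (α * (1 - s))

/-- inverse of `g` -/
def gInv (α : ℝ) : ℝ → ℝ := Function.invFun (gfun α)

/-- chi-squared measure with `q` degrees of freedom -/
def chiSq (q : ℝ) : Measure ℝ := gammaMeasure (q / 2) (1 / 2)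

/-- The FAB confidence set with spending function `s`, based on t-quantiles
with `q` degrees of freedom. -/
def fabSet (q α : ℝ) (s : ℝ → ℝ) (θhat σhat : ℝ) : Set ℝ :=
  {θ : ℝ | θhat + σhat * tQuantile q (α * (1 - s θ)) < θ ∧
           θ < θhat + σhat * tQuantile q (1 - α * s θ)}

/-- The FAB confidence set with spending function `s`, based on normal quantiles. -/
def fabSetZ (α : ℝ) (s : ℝ → ℝ) (θhat σ : ℝ) : Set ℝ :=
  {θ : ℝ | θhat + σ * PhiInv (α * (1 - s θ)) < θ ∧
           θ < θhat + σ * PhiInv (1 - α * s θ)}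

/-- A measure on `Fin m → ℝ` is multivariate Gaussian with the given mean vector and
covariance matrix iff every linear functional has the corresponding univariate
Gaussian distribution. -/
def IsGaussianVec {m : ℕ} (μ : Measure (Fin m → ℝ)) (mean : Fin m → ℝ)
    (S : Matrix (Fin m) (Fin m) ℝ) : Prop :=
  ∀ u : Fin m → ℝ,
    Measure.map (fun x => ∑ i, u i * x i) μ =
      gaussianReal (∑ i, u i * mean i) (Real.toNNReal (u ⬝ᵥ S.mulVec u))

end

open MeasureTheory ProbabilityTheory Real Set Matrix


set_option maxHeartbeats 1000000

section FabAuxSection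
open MeasureTheory ProbabilityTheory Real Set Filter Topology
open scoped ENNReal NNReal

noncomputable section
namespace FabAux

def cdf (f : ℝ → ℝ) (x : ℝ) : ℝ := ∫ t in Set.Iic x, f t

def quant (f : ℝ → ℝ) (p : ℝ) : ℝ := sInf {x : ℝ | p ≤ cdf f x}

structure NicePdf (f : ℝ → ℝ) : Prop where
  pos : ∀ x, 0 < f x
  int : MeasureTheory.Integrable f
  tot : ∫ x, f x = 1

namespace NicePdf

variable {f : ℝ → ℝ} (hf : NicePdf f)
include hf

lemma nonneg' (x : ℝ) : 0 ≤ f x := (hf.pos x).le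

lemma support_eq : Function.support f = Set.univ :=
  Set.eq_univ_iff_forall.mpr fun x => Function.mem_support.mpr (ne_of_gt (hf.pos x))

lemma setIntegral_pos {s : Set ℝ} (hs : MeasurableSet s) (hvol : 0 < volume s) :
    0 < ∫ t in s, f t := by
  rw [setIntegral_pos_iff_support_of_nonneg_ae (ae_of_all _ hf.nonneg')
    (hf.int.integrableOn)]
  rwa [hf.support_eq, Set.univ_inter]

lemma cdf_mono : Monotone (cdf f) := fun a b hab =>
  setIntegral_mono_set hf.int.integrableOn (ae_of_all _ hf.nonneg')
    (HasSubset.Subset.eventuallyLE (Iic_subset_Iic.mpr hab))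

lemma cdf_add_Ioi (x : ℝ) : cdf f x + ∫ t in Set.Ioi x, f t = 1 := by
  rw [cdf, ← hf.tot, ← setIntegral_union (Set.Iic_disjoint_Ioi le_rfl) measurableSet_Ioi
    hf.int.integrableOn hf.int.integrableOn, Set.Iic_union_Ioi,
    setIntegral_univ]

lemma cdf_strictMono : StrictMono (cdf f) := by
  intro a b hab
  have h1 : Set.Iic a ∪ Set.Ioc a b = Set.Iic b := Set.Iic_union_Ioc_eq_Iic hab.le
  have h2 : cdf f b = cdf f a + ∫ t in Set.Ioc a b, f t := by
    rw [cdf, cdf, ← h1, setIntegral_union (Set.Iic_disjoint_Ioc le_rfl) measurableSet_Ioc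
      hf.int.integrableOn hf.int.integrableOn]
  have h3 : 0 < ∫ t in Set.Ioc a b, f t := by
    refine hf.setIntegral_pos measurableSet_Ioc ?_
    rw [Real.volume_Ioc]
    exact ENNReal.ofReal_pos.mpr (by linarith)
  linarith

lemma cdf_pos (x : ℝ) : 0 < cdf f x :=
  hf.setIntegral_pos measurableSet_Iic (by simp)

lemma cdf_lt_one (x : ℝ) : cdf f x < 1 := by
  have h1 := hf.cdf_add_Ioi x
  have h2 : 0 < ∫ t in Set.Ioi x, f t :=
    hf.setIntegral_pos measurableSet_Ioi (by simp)
  linarith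

lemma cdf_continuous : Continuous (cdf f) := by
  have h : ∀ x : ℝ, cdf f x = (∫ t in (0:ℝ)..x, f t) + cdf f 0 := by
    intro x
    have := intervalIntegral.integral_Iic_sub_Iic (hf.int.integrableOn (s := Set.Iic (0:ℝ)))
      (hf.int.integrableOn (s := Set.Iic x))
    rw [cdf, cdf]
    linarith [this]
  have : cdf f = fun x => (∫ t in (0:ℝ)..x, f t) + cdf f 0 := funext h
  rw [this]
  exact ((hf.int.continuous_primitive 0).add continuous_const)

lemma exists_cdf_ge {p : ℝ} (hp : p < 1) : ∃ x : ℝ, p ≤ cdf f x := by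
  have hU : (⋃ n : ℕ, Set.Iic (n : ℝ)) = Set.univ := by
    ext x
    simp only [Set.mem_iUnion, Set.mem_Iic, Set.mem_univ, iff_true]
    exact ⟨⌈x⌉₊, Nat.le_ceil x⟩
  have ht : Tendsto (fun n : ℕ => cdf f n) atTop (𝓝 1) := by
    have := tendsto_setIntegral_of_monotone (μ := (volume : Measure ℝ))
      (s := fun n : ℕ => Set.Iic (n : ℝ)) (f := f)
      (fun n => measurableSet_Iic)
      (fun n m hnm => Set.Iic_subset_Iic.mpr (by exact_mod_cast hnm))
      (by rw [hU]; exact hf.int.integrableOn)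
    rwa [hU, setIntegral_univ, hf.tot] at this
  obtain ⟨n, hn⟩ := (ht.eventually (eventually_gt_nhds hp)).exists
  exact ⟨n, hn.le⟩

lemma exists_cdf_lt {p : ℝ} (hp : 0 < p) : ∃ x : ℝ, cdf f x < p := by
  have hU : (⋃ n : ℕ, Set.Ioi (-(n : ℝ))) = Set.univ := by
    ext x
    simp only [Set.mem_iUnion, Set.mem_Ioi, Set.mem_univ, iff_true]
    refine ⟨⌈-x⌉₊ + 1, ?_⟩
    have := Nat.le_ceil (-x)
    push_cast
    linarith
  have ht : Tendsto (fun n : ℕ => ∫ t in Set.Ioi (-(n:ℝ)), f t) atTop (𝓝 1) := by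
    have := tendsto_setIntegral_of_monotone (μ := (volume : Measure ℝ))
      (s := fun n : ℕ => Set.Ioi (-(n : ℝ))) (f := f)
      (fun n => measurableSet_Ioi)
      (fun n m hnm => Set.Ioi_subset_Ioi (by push_cast; exact_mod_cast neg_le_neg (by exact_mod_cast hnm)))
      (by rw [hU]; exact hf.int.integrableOn)
    rwa [hU, setIntegral_univ, hf.tot] at this
  obtain ⟨n, hn⟩ := (ht.eventually (eventually_gt_nhds (by linarith : 1 - p < 1))).exists
  refine ⟨-(n:ℝ), ?_⟩
  have := hf.cdf_add_Ioi (-(n:ℝ))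
  linarith


lemma quantSet_nonempty {p : ℝ} (hp : p < 1) : {x : ℝ | p ≤ cdf f x}.Nonempty :=
  hf.exists_cdf_ge hp

lemma quantSet_bddBelow {p : ℝ} (hp : 0 < p) : BddBelow {x : ℝ | p ≤ cdf f x} := by
  obtain ⟨y, hy⟩ := hf.exists_cdf_lt hp
  exact ⟨y, fun x hx => by
    by_contra h
    exact absurd (le_trans hx (hf.cdf_mono (le_of_not_ge h))) (not_le.mpr hy)⟩

lemma quant_le {p x : ℝ} (hp : 0 < p) (hx : p ≤ cdf f x) : quant f p ≤ x :=
  csInf_le (hf.quantSet_bddBelow hp) hx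

lemma le_cdf_quant {p : ℝ} (hp0 : 0 < p) (hp1 : p < 1) : p ≤ cdf f (quant f p) := by
  have hclosed : IsClosed {x : ℝ | p ≤ cdf f x} :=
    isClosed_le continuous_const hf.cdf_continuous
  exact hclosed.csInf_mem (hf.quantSet_nonempty hp1) (hf.quantSet_bddBelow hp0)

lemma quant_eq_zero_of_nonpos {p : ℝ} (hp : p ≤ 0) : quant f p = 0 := by
  have h : {x : ℝ | p ≤ cdf f x} = Set.univ :=
    Set.eq_univ_iff_forall.mpr fun x => le_trans hp (hf.cdf_pos x).le
  rw [quant, h]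
  apply Real.sInf_of_not_bddBelow
  rintro ⟨b, hb⟩
  have := hb (Set.mem_univ (b - 1))
  linarith

lemma quant_eq_zero_of_one_le {p : ℝ} (hp : 1 ≤ p) : quant f p = 0 := by
  have h : {x : ℝ | p ≤ cdf f x} = ∅ := by
    ext x
    simp only [Set.mem_setOf_eq, Set.mem_empty_iff_false, iff_false, not_le]
    exact lt_of_lt_of_le (hf.cdf_lt_one x) hp
  rw [quant, h, Real.sInf_empty]

lemma quant_mono {p p' : ℝ} (hp0 : 0 < p) (hp1 : p' < 1) (hpp : p ≤ p') :
    quant f p ≤ quant f p' :=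
  csInf_le_csInf (hf.quantSet_bddBelow hp0) (hf.quantSet_nonempty hp1)
    (fun x hx => le_trans hpp hx)

lemma quant_strictMono {p p' : ℝ} (hp0 : 0 < p) (hpp : p < p') (hp1 : p' < 1) :
    quant f p < quant f p' := by
  set x' := quant f p' with hx'def
  have hx' : p < cdf f x' := lt_of_lt_of_le hpp (hf.le_cdf_quant (lt_trans hp0 hpp) hp1)
  have hev : ∀ᶠ y in 𝓝 x', p < cdf f y :=
    hf.cdf_continuous.continuousAt.eventually (eventually_gt_nhds hx')
  have hev' : ∀ᶠ y in 𝓝[<] x', p < cdf f y := hev.filter_mono nhdsWithin_le_nhds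
  obtain ⟨y, hy1, hy2⟩ := (hev'.and self_mem_nhdsWithin).exists
  exact lt_of_le_of_lt (hf.quant_le hp0 hy1.le) hy2

lemma cdf_quant {p : ℝ} (hp0 : 0 < p) (hp1 : p < 1) : cdf f (quant f p) = p := by
  refine le_antisymm ?_ (hf.le_cdf_quant hp0 hp1)
  by_contra h
  push_neg at h
  have hev : ∀ᶠ y in 𝓝 (quant f p), p < cdf f y :=
    hf.cdf_continuous.continuousAt.eventually (eventually_gt_nhds h)
  have hev' : ∀ᶠ y in 𝓝[<] (quant f p), p < cdf f y := hev.filter_mono nhdsWithin_le_nhds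
  obtain ⟨y, hy1, hy2⟩ := (hev'.and self_mem_nhdsWithin).exists
  exact absurd (hf.quant_le hp0 hy1.le) (not_le.mpr hy2)

lemma quant_cdf (x : ℝ) : quant f (cdf f x) = x := by
  refine le_antisymm (hf.quant_le (hf.cdf_pos x) le_rfl) ?_
  refine le_csInf ⟨x, show cdf f x ≤ cdf f x from le_rfl⟩ fun y hy => ?_
  by_contra h
  push_neg at h
  exact absurd hy (not_le.mpr (hf.cdf_strictMono h))

lemma quant_pos {p : ℝ} (hp : cdf f 0 < p) (hp1 : p < 1) : 0 < quant f p := by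
  have hev : ∀ᶠ y in 𝓝 (0:ℝ), cdf f y < p :=
    hf.cdf_continuous.continuousAt.eventually (eventually_lt_nhds hp)
  have hev' : ∀ᶠ y in 𝓝[>] (0:ℝ), cdf f y < p := hev.filter_mono nhdsWithin_le_nhds
  obtain ⟨y, hy1, hy2⟩ := (hev'.and self_mem_nhdsWithin).exists
  refine lt_of_lt_of_le hy2 (le_csInf (hf.quantSet_nonempty hp1) fun z hz => ?_)
  by_contra h
  push_neg at h
  exact absurd (le_trans hz (hf.cdf_mono h.le)) (not_le.mpr hy1)

lemma quant_continuousOn : ContinuousOn (quant f) (Set.Ioo 0 1) := by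
  intro p0 hp0
  obtain ⟨hp0l, hp0r⟩ := hp0
  rw [ContinuousWithinAt]
  refine tendsto_order.2 ⟨?_, ?_⟩
  · intro b hb
    set b' := (b + quant f p0) / 2 with hb'
    have hbb' : b < b' := by simp only [hb']; linarith
    have hb'q : b' < quant f p0 := by simp only [hb']; linarith
    have hcb' : cdf f b' < p0 := by
      by_contra h
      push_neg at h
      exact absurd (hf.quant_le hp0l h) (not_le.mpr hb'q)
    have hmem : Set.Ioi (cdf f b') ∈ 𝓝[Set.Ioo 0 1] p0 :=
      nhdsWithin_le_nhds (Ioi_mem_nhds hcb')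
    filter_upwards [hmem, self_mem_nhdsWithin] with p hp hp'
    have : b' ≤ quant f p := by
      refine le_csInf (hf.quantSet_nonempty hp'.2) fun z hz => ?_
      by_contra h
      push_neg at h
      exact absurd (le_trans hz (hf.cdf_mono h.le)) (not_le.mpr hp)
    linarith
  · intro b hb
    set b' := (quant f p0 + b) / 2 with hb'
    have hqb' : quant f p0 < b' := by simp only [hb']; linarith
    have hb'b : b' < b := by simp only [hb']; linarith
    obtain ⟨z, hz1, hz2⟩ := (csInf_lt_iff (hf.quantSet_bddBelow hp0l)
      (hf.quantSet_nonempty hp0r)).mp hqb'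
    have hcb' : p0 < cdf f b' := lt_of_le_of_lt hz1 (hf.cdf_strictMono hz2)
    have hmem : Set.Iio (cdf f b') ∈ 𝓝[Set.Ioo 0 1] p0 :=
      nhdsWithin_le_nhds (Iio_mem_nhds hcb')
    filter_upwards [hmem, self_mem_nhdsWithin] with p hp hp'
    exact lt_of_le_of_lt (hf.quant_le hp'.1 hp.le) hb'b


end NicePdf

lemma lintegral_rpow_exp {a r : ℝ} (ha : 0 < a) (hr : 0 < r) :
    ∫⁻ t in Set.Ioi (0:ℝ), ENNReal.ofReal (t ^ (a-1) * Real.exp (-(r * t)))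
      = ENNReal.ofReal (Real.Gamma a / r ^ a) := by
  have h1 := ProbabilityTheory.lintegral_gammaPDF_eq_one ha hr
  have hΓ : 0 < Real.Gamma a := Real.Gamma_pos_of_pos ha
  have hc : 0 < r ^ a / Real.Gamma a := by positivity
  have h2 : ∀ x : ℝ, ProbabilityTheory.gammaPDF a r x
      = (Set.Ici (0:ℝ)).indicator
        (fun x => ENNReal.ofReal (r ^ a / Real.Gamma a) *
          ENNReal.ofReal (x ^ (a-1) * Real.exp (-(r * x)))) x := by
    intro x
    rw [ProbabilityTheory.gammaPDF_eq, Set.indicator_apply]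
    by_cases hx : (0:ℝ) ≤ x
    · rw [if_pos hx, if_pos (Set.mem_Ici.mpr hx), ← ENNReal.ofReal_mul hc.le]
      ring_nf
    · rw [if_neg hx, if_neg (fun h => hx (Set.mem_Ici.mp h)), ENNReal.ofReal_zero]
  rw [funext h2, lintegral_indicator measurableSet_Ici] at h1
  rw [← MeasureTheory.restrict_Ioi_eq_restrict_Ici] at h1
  rw [lintegral_const_mul' _ _ ENNReal.ofReal_ne_top] at h1
  set I := ∫⁻ t in Set.Ioi (0:ℝ), ENNReal.ofReal (t ^ (a-1) * Real.exp (-(r * t))) with hI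
  have hc0 : ENNReal.ofReal (r ^ a / Real.Gamma a) ≠ 0 := (ENNReal.ofReal_pos.mpr hc).ne'
  have : I = (ENNReal.ofReal (r ^ a / Real.Gamma a))⁻¹ := by
    rw [← one_mul I, ← ENNReal.inv_mul_cancel hc0 ENNReal.ofReal_ne_top, mul_assoc, h1, mul_one]
  rw [this, ← ENNReal.ofReal_inv_of_pos hc, inv_div]

lemma lintegral_exp_neg_mul_sq {b : ℝ} (hb : 0 < b) :
    ∫⁻ x : ℝ, ENNReal.ofReal (Real.exp (-b * x^2)) = ENNReal.ofReal (Real.sqrt (π / b)) := by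
  rw [← integral_gaussian, ← ofReal_integral_eq_lintegral_ofReal (integrable_exp_neg_mul_sq hb)
    (ae_of_all _ fun x => (Real.exp_pos _).le)]

lemma lintegral_tPdf_core {q : ℝ} (hq : 0 < q) :
    ∫⁻ x : ℝ, ENNReal.ofReal ((1 + x^2/q) ^ (-((q+1)/2)))
      = ENNReal.ofReal (Real.sqrt (q * π) * Real.Gamma (q/2) / Real.Gamma ((q+1)/2)) := by
  set a : ℝ := (q+1)/2 with hadef
  have ha : 0 < a := by simp only [hadef]; linarith
  have hΓa : 0 < Real.Gamma a := Real.Gamma_pos_of_pos ha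
  set G : ℝ → ℝ → ℝ≥0∞ :=
    fun x t => ENNReal.ofReal (t ^ (a-1) * Real.exp (-((1 + x^2/q) * t))) with hGdef
  have hcx : ∀ x : ℝ, 0 < 1 + x^2/q := fun x => by positivity
  have h1 : ∀ x : ℝ, ∫⁻ t in Set.Ioi (0:ℝ), G x t
      = ENNReal.ofReal (Real.Gamma a) * ENNReal.ofReal ((1 + x^2/q) ^ (-a)) := by
    intro x
    rw [hGdef]
    rw [lintegral_rpow_exp ha (hcx x), ← ENNReal.ofReal_mul hΓa.le]
    congr 1
    rw [Real.rpow_neg (hcx x).le, div_eq_mul_inv]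
  have h2 : ∀ t ∈ Set.Ioi (0:ℝ), ∫⁻ x : ℝ, G x t
      = ENNReal.ofReal (Real.sqrt (q * π)) * ENNReal.ofReal (t ^ (q/2-1) * Real.exp (-t)) := by
    intro t ht
    rw [Set.mem_Ioi] at ht
    have hsq : 0 < t / q := div_pos ht hq
    have hre : ∀ x : ℝ, t ^ (a-1) * Real.exp (-((1 + x^2/q) * t))
        = (t ^ (a-1) * Real.exp (-t)) * Real.exp (-(t/q) * x^2) := by
      intro x
      have hexp : -((1 + x^2/q) * t) = -t + -(t/q) * x^2 := by
        field_simp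
        ring
      rw [hexp, Real.exp_add]
      ring
    have hpt : ∀ x : ℝ, G x t = ENNReal.ofReal (t ^ (a-1) * Real.exp (-t)) *
        ENNReal.ofReal (Real.exp (-(t/q) * x^2)) := by
      intro x
      simp only [hGdef]
      rw [hre x, ENNReal.ofReal_mul (by positivity)]
    simp only [hpt]
    rw [lintegral_const_mul' _ _ ENNReal.ofReal_ne_top, lintegral_exp_neg_mul_sq hsq,
      ← ENNReal.ofReal_mul (by positivity), ← ENNReal.ofReal_mul (by positivity)]
    congr 1
    have hsqrt : Real.sqrt (π / (t/q)) = Real.sqrt (q * π) * t ^ (-(1/(2:ℝ))) := by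
      rw [div_div_eq_mul_div, mul_comm π q, Real.sqrt_div (by positivity),
        Real.sqrt_eq_rpow t, div_eq_mul_inv, ← Real.rpow_neg ht.le]
    rw [hsqrt]
    have : t ^ (a-1) * Real.exp (-t) * (Real.sqrt (q*π) * t ^ (-(1/(2:ℝ))))
        = Real.sqrt (q*π) * ((t ^ (a-1) * t ^ (-(1/(2:ℝ)))) * Real.exp (-t)) := by ring
    rw [this, ← Real.rpow_add ht]
    congr 2
    rw [hadef]; ring
  have hGmeas : AEMeasurable (Function.uncurry G)
      ((volume : Measure ℝ).prod ((volume : Measure ℝ).restrict (Set.Ioi 0))) := by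
    refine Measurable.aemeasurable ?_
    refine Measurable.ennreal_ofReal ?_
    refine Measurable.mul (measurable_snd.pow_const (a-1)) ?_
    exact (((measurable_const.add ((measurable_fst.pow_const 2).div_const q)).mul
      measurable_snd).neg).exp
  have hswap := MeasureTheory.lintegral_lintegral_swap hGmeas
  have hL : ∫⁻ x : ℝ, ∫⁻ t in Set.Ioi (0:ℝ), G x t
      = ENNReal.ofReal (Real.Gamma a) * ∫⁻ x : ℝ, ENNReal.ofReal ((1 + x^2/q) ^ (-a)) := by
    rw [← lintegral_const_mul' _ _ ENNReal.ofReal_ne_top]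
    exact lintegral_congr h1
  have hR : ∫⁻ t in Set.Ioi (0:ℝ), ∫⁻ x : ℝ, G x t
      = ENNReal.ofReal (Real.sqrt (q*π) * Real.Gamma (q/2)) := by
    rw [setLIntegral_congr_fun measurableSet_Ioi (fun t ht => h2 t ht),
      lintegral_const_mul' _ _ ENNReal.ofReal_ne_top]
    have : ∫⁻ t in Set.Ioi (0:ℝ), ENNReal.ofReal (t ^ (q/2-1) * Real.exp (-t))
        = ENNReal.ofReal (Real.Gamma (q/2) / (1:ℝ) ^ (q/2)) := by
      have := lintegral_rpow_exp (a := q/2) (r := 1) (by linarith) one_pos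
      simp only [one_mul] at this
      exact this
    rw [this, Real.one_rpow, div_one, ← ENNReal.ofReal_mul (Real.sqrt_nonneg _)]
  rw [hL, hR] at hswap
  have hΓ0 : ENNReal.ofReal (Real.Gamma a) ≠ 0 := (ENNReal.ofReal_pos.mpr hΓa).ne'
  have hres : ∫⁻ x : ℝ, ENNReal.ofReal ((1 + x^2/q) ^ (-a))
      = (ENNReal.ofReal (Real.Gamma a))⁻¹ * ENNReal.ofReal (Real.sqrt (q*π) * Real.Gamma (q/2)) := by
    rw [← hswap, ← mul_assoc, ENNReal.inv_mul_cancel hΓ0 ENNReal.ofReal_ne_top, one_mul]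
  rw [hres, ← ENNReal.ofReal_inv_of_pos hΓa, ← ENNReal.ofReal_mul (by positivity)]
  congr 1
  rw [hadef]
  ring


lemma tPdf_pos {q : ℝ} (hq : 0 < q) (x : ℝ) : 0 < tPdf q x := by
  have h1 : 0 < Real.Gamma ((q+1)/2) := Real.Gamma_pos_of_pos (by linarith)
  have h2 : 0 < Real.Gamma (q/2) := Real.Gamma_pos_of_pos (by linarith)
  have h3 : 0 < Real.sqrt (q * π) := Real.sqrt_pos.mpr (by positivity)
  have h4 : 0 < 1 + x^2/q := by positivity
  exact mul_pos (by positivity) (Real.rpow_pos_of_pos h4 _)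

lemma tPdf_continuous {q : ℝ} (hq : 0 < q) : Continuous (tPdf q) := by
  refine Continuous.mul continuous_const ?_
  refine Continuous.rpow_const ?_ fun x => Or.inl ?_
  · exact (continuous_const.add ((continuous_id.pow 2).div_const q))
  · have : 0 < 1 + x^2/q := by positivity
    exact ne_of_gt this

lemma lintegral_tPdf {q : ℝ} (hq : 0 < q) :
    ∫⁻ x : ℝ, ENNReal.ofReal (tPdf q x) = 1 := by
  have h1 : 0 < Real.Gamma ((q+1)/2) := Real.Gamma_pos_of_pos (by linarith)
  have h2 : 0 < Real.Gamma (q/2) := Real.Gamma_pos_of_pos (by linarith)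
  have h3 : 0 < Real.sqrt (q * π) := Real.sqrt_pos.mpr (by positivity)
  set k : ℝ := Real.Gamma ((q+1)/2) / (Real.sqrt (q * π) * Real.Gamma (q/2)) with hk
  have hkpos : 0 < k := by positivity
  have heq : ∀ x : ℝ, ENNReal.ofReal (tPdf q x)
      = ENNReal.ofReal k * ENNReal.ofReal ((1 + x^2/q) ^ (-((q+1)/2))) := by
    intro x
    rw [← ENNReal.ofReal_mul hkpos.le]
    congr 1
    rw [tPdf, neg_div]
  simp only [heq]
  rw [lintegral_const_mul' _ _ ENNReal.ofReal_ne_top, lintegral_tPdf_core hq,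
    ← ENNReal.ofReal_mul hkpos.le]
  rw [show k * (Real.sqrt (q * π) * Real.Gamma (q/2) / Real.Gamma ((q+1)/2)) = 1 by
    rw [hk]; field_simp]
  exact ENNReal.ofReal_one

lemma nicePdf_tPdf {q : ℝ} (hq : 0 < q) : NicePdf (tPdf q) := by
  have hmeas : AEStronglyMeasurable (tPdf q) volume :=
    (tPdf_continuous hq).aestronglyMeasurable
  have hnn : 0 ≤ᵐ[volume] tPdf q := ae_of_all _ fun x => (tPdf_pos hq x).le
  have hint : Integrable (tPdf q) := by
    refine ⟨hmeas, ?_⟩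
    rw [hasFiniteIntegral_iff_ofReal hnn, lintegral_tPdf hq]
    exact ENNReal.one_lt_top
  refine ⟨tPdf_pos hq, hint, ?_⟩
  rw [integral_eq_lintegral_of_nonneg_ae hnn hmeas, lintegral_tPdf hq, ENNReal.toReal_one]

lemma nicePdf_gauss : NicePdf (gaussianPDFReal 0 1) :=
  ⟨fun x => gaussianPDFReal_pos 0 1 x one_ne_zero,
   integrable_gaussianPDFReal 0 1,
   integral_gaussianPDFReal_eq_one 0 one_ne_zero⟩

lemma Phi_eq (x : ℝ) : Phi x = cdf (gaussianPDFReal 0 1) x := by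
  rw [Phi, gaussianReal_apply_eq_integral 0 one_ne_zero,
    ENNReal.toReal_ofReal (integral_nonneg fun t => gaussianPDFReal_nonneg 0 1 t)]
  rfl

lemma tPdf_even {q : ℝ} (x : ℝ) : tPdf q (-x) = tPdf q x := by
  rw [tPdf, tPdf, neg_pow]
  norm_num

lemma tCdf_zero {q : ℝ} (hq : 0 < q) : cdf (tPdf q) 0 = 1/2 := by
  have hsym : cdf (tPdf q) 0 = ∫ t in Set.Ioi (0:ℝ), tPdf q t := by
    have h1 : ∫ t in Set.Iic (0:ℝ), tPdf q t = ∫ t in Set.Iic (0:ℝ), tPdf q (-t) := by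
      refine setIntegral_congr_fun measurableSet_Iic fun t _ => (tPdf_even t).symm
    rw [cdf, h1, integral_comp_neg_Iic, neg_zero]
  have hadd : cdf (tPdf q) 0 + ∫ t in Set.Ioi (0:ℝ), tPdf q t = 1 := by
    rw [cdf, ← (nicePdf_tPdf hq).tot, ← MeasureTheory.setIntegral_union
      (Set.Iic_disjoint_Ioi le_rfl) measurableSet_Ioi
      (nicePdf_tPdf hq).int.integrableOn (nicePdf_tPdf hq).int.integrableOn,
      Set.Iic_union_Ioi, setIntegral_univ]
  linarith [hsym, hadd]


lemma PhiInv_eq : PhiInv = quant (gaussianPDFReal 0 1) := by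
  funext p
  rw [PhiInv, quant]
  congr 1
  ext x
  rw [Set.mem_setOf_eq, Set.mem_setOf_eq, Phi_eq]

lemma tQuantile_eq (q : ℝ) : tQuantile q = quant (tPdf q) := rfl

lemma gfun_surj {α : ℝ} (hα0 : 0 < α) (hα2 : α < 1/2) (x : ℝ) :
    ∃ s ∈ Set.Ioo (0:ℝ) 1, gfun α s = x := by
  have ng := nicePdf_gauss
  set g := gaussianPDFReal 0 1 with hg
  have hα1 : α < 1 := by linarith
  have hgf : ∀ s : ℝ, gfun α s = quant g (α*s) - quant g (α*(1-s)) := by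
    intro s
    rw [gfun, PhiInv_eq]
  set m0 := quant g (α/2) with hm0
  -- upper point s2
  set y2 : ℝ := m0 - x with hy2
  set e2 : ℝ := min (cdf g y2) (α/2) with he2
  have he2pos : 0 < e2 := lt_min (ng.cdf_pos y2) (by linarith)
  have he2le : e2 ≤ α/2 := min_le_right _ _
  set s2 : ℝ := 1 - e2/α with hs2
  have hs2a : α * s2 = α - e2 := by
    rw [hs2]
    field_simp
  have hs2b : α * (1 - s2) = e2 := by
    rw [hs2]
    field_simp
    ring
  have hdiv : e2/α ≤ 1/2 := by
    rw [div_le_iff₀ hα0]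
    linarith
  have hs2half : 1/2 ≤ s2 := by
    rw [hs2]; linarith
  have hs2lt1 : s2 < 1 := by
    rw [hs2]
    have : 0 < e2/α := div_pos he2pos hα0
    linarith
  have hgs2 : x ≤ gfun α s2 := by
    rw [hgf, hs2a, hs2b]
    have hA : quant g e2 ≤ y2 := by
      calc quant g e2 ≤ quant g (cdf g y2) :=
            ng.quant_mono he2pos (ng.cdf_lt_one y2) (min_le_left _ _)
        _ = y2 := ng.quant_cdf y2
    have hB : m0 ≤ quant g (α - e2) := by
      rw [hm0]
      exact ng.quant_mono (by linarith) (by linarith) (by linarith)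
    rw [hy2] at hA
    linarith
  -- lower point s1
  set y1 : ℝ := x + m0 with hy1
  set e1 : ℝ := min (cdf g y1) (α/2) with he1
  have he1pos : 0 < e1 := lt_min (ng.cdf_pos y1) (by linarith)
  have he1le : e1 ≤ α/2 := min_le_right _ _
  set s1 : ℝ := e1/α with hs1
  have hs1a : α * s1 = e1 := by
    rw [hs1]
    field_simp
  have hs1b : α * (1 - s1) = α - e1 := by
    rw [hs1]
    field_simp
  have hs1pos : 0 < s1 := div_pos he1pos hα0
  have hs1half : s1 ≤ 1/2 := by
    rw [hs1, div_le_iff₀ hα0]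
    linarith
  have hgs1 : gfun α s1 ≤ x := by
    rw [hgf, hs1a, hs1b]
    have hA : quant g e1 ≤ y1 := by
      calc quant g e1 ≤ quant g (cdf g y1) :=
            ng.quant_mono he1pos (ng.cdf_lt_one y1) (min_le_left _ _)
        _ = y1 := ng.quant_cdf y1
    have hB : m0 ≤ quant g (α - e1) := by
      rw [hm0]
      exact ng.quant_mono (by linarith) (by linarith) (by linarith)
    rw [hy1] at hA
    linarith
  have hs12 : s1 ≤ s2 := le_trans hs1half hs2half
  -- continuity of gfun on Icc s1 s2
  have hsub1 : ∀ s ∈ Set.Icc s1 s2, α * s ∈ Set.Ioo (0:ℝ) 1 := by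
    intro s hs
    constructor
    · exact mul_pos hα0 (lt_of_lt_of_le hs1pos hs.1)
    · have : α * s ≤ α * s2 := mul_le_mul_of_nonneg_left hs.2 hα0.le
      rw [hs2a] at this
      linarith
  have hsub2 : ∀ s ∈ Set.Icc s1 s2, α * (1 - s) ∈ Set.Ioo (0:ℝ) 1 := by
    intro s hs
    constructor
    · have : α * (1 - s2) ≤ α * (1 - s) :=
        mul_le_mul_of_nonneg_left (by linarith [hs.2]) hα0.le
      rw [hs2b] at this
      linarith
    · have : α * (1 - s) ≤ α * (1 - s1) :=
        mul_le_mul_of_nonneg_left (by linarith [hs.1]) hα0.le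
      rw [hs1b] at this
      linarith
  have hcont : ContinuousOn (gfun α) (Set.Icc s1 s2) := by
    have hc1 : ContinuousOn (fun s : ℝ => quant g (α * s)) (Set.Icc s1 s2) :=
      ng.quant_continuousOn.comp
        ((continuous_const.mul continuous_id).continuousOn) hsub1
    have hc2 : ContinuousOn (fun s : ℝ => quant g (α * (1 - s))) (Set.Icc s1 s2) :=
      ng.quant_continuousOn.comp
        ((continuous_const.mul (continuous_const.sub continuous_id)).continuousOn) hsub2
    have : ContinuousOn (fun s : ℝ => quant g (α*s) - quant g (α*(1-s))) (Set.Icc s1 s2) :=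
      hc1.sub hc2
    refine this.congr fun s _ => hgf s
  obtain ⟨s, hsmem, hgs⟩ := intermediate_value_Icc hs12 hcont ⟨hgs1, hgs2⟩
  exact ⟨s, ⟨lt_of_lt_of_le hs1pos hsmem.1, lt_of_le_of_lt hsmem.2 hs2lt1⟩, hgs⟩


end FabAux
end
end FabAuxSection

open FabAux

/-- Lemma 3: the width of the FAB interval, whose endpoints `β̄, β̲` solve the
defining equations, is bounded by `|β̂| + wσ̂(|t(α/2)| + |t(1−α/2)|)`. -/
theorem fab_width_bound
    (q : ℕ) (hq : 1 ≤ q) (α : ℝ) (hα : α ∈ Set.Ioo (0 : ℝ) (1 / 2))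
    (w σt τ2 σh βh : ℝ) (hw : 0 < w) (hσt : 0 < σt) (hτ2 : 0 < τ2) (hσh : 0 < σh)
    (βbar βlow : ℝ)
    (hup : βbar - w * σh * tQuantile q (1 - α * gInv α (2 * w * σt * βbar / τ2)) = βh)
    (hlo : βlow - w * σh * tQuantile q (α * (1 - gInv α (2 * w * σt * βlow / τ2))) = βh) :
    βbar - βlow < |βh| + w * σh * (|tQuantile q (α / 2)| + |tQuantile q (1 - α / 2)|) := by
  obtain ⟨hα0, hα2⟩ := hα
  have hα1 : α < 1 := by linarith
  have hq0 : (0:ℝ) < (q:ℝ) := by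
    have : (1:ℝ) ≤ (q:ℝ) := by exact_mod_cast hq
    linarith
  have nt := nicePdf_tPdf hq0
  have ng := nicePdf_gauss
  have hws : 0 < w * σh := mul_pos hw hσh
  set Tp : ℝ := tQuantile q (1 - α / 2) with hTp
  set Tm : ℝ := tQuantile q (α / 2) with hTm
  have hcdf0 : cdf (tPdf q) 0 = 1/2 := tCdf_zero hq0
  have hTppos : 0 < Tp := by
    rw [hTp, tQuantile_eq]
    exact nt.quant_pos (by rw [hcdf0]; linarith) (by linarith)
  have hTmle : Tm ≤ 0 := by
    rw [hTm, tQuantile_eq]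
    exact nt.quant_le (by linarith) (by rw [hcdf0]; linarith)
  -- Claim 1
  have claim1 : βbar < max βh 0 + w * σh * |Tp| := by
    rcases le_or_gt βbar 0 with hb | hb
    · have h1 : 0 ≤ max βh 0 := le_max_right _ _
      have h2 : 0 < w * σh * |Tp| := mul_pos hws (abs_pos.mpr hTppos.ne')
      linarith
    · set xb : ℝ := 2 * w * σt * βbar / τ2 with hxb
      have hxbpos : 0 < xb := by
        rw [hxb]
        positivity
      set sb : ℝ := gInv α xb with hsb
      have hgfun : gfun α sb = xb := by
        rw [hsb, gInv]
        obtain ⟨s, _, hs⟩ := gfun_surj hα0 hα2 xb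
        exact Function.invFun_eq ⟨s, hs⟩
      set t1 : ℝ := tQuantile q (1 - α * sb) with ht1
      have hbeq : βbar = βh + w * σh * t1 := by
        rw [ht1, hsb, hxb]
        linarith [hup]
      have ht1lt : t1 < Tp := by
        rcases le_or_gt sb 0 with hs0 | hs0
        · have hp1 : (1:ℝ) ≤ 1 - α * sb := by nlinarith
          rw [ht1, tQuantile_eq, nt.quant_eq_zero_of_one_le hp1]
          exact hTppos
        · rcases lt_or_ge sb 1 with hs1 | hs1
          · -- sb ∈ (0,1): show 1/2 < sb
            have hhalf : 1/2 < sb := by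
              by_contra hle
              push_neg at hle
              have hm : α * sb ≤ α * (1 - sb) :=
                mul_le_mul_of_nonneg_left (by linarith) hα0.le
              have hql : quant (gaussianPDFReal 0 1) (α * sb)
                  ≤ quant (gaussianPDFReal 0 1) (α * (1 - sb)) :=
                ng.quant_mono (mul_pos hα0 hs0) (by nlinarith) hm
              have hg0 : gfun α sb ≤ 0 := by
                rw [gfun, PhiInv_eq]
                linarith
              rw [hgfun] at hg0
              linarith
            have hlt : α * sb < α := by nlinarith
            have hgt : α / 2 < α * sb := by nlinarith
            rw [ht1, hTp, tQuantile_eq]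
            exact nt.quant_strictMono (by linarith) (by linarith) (by linarith)
          · -- sb ≥ 1
            have hαs1 : α * sb < 1 := by
              by_contra hge
              push_neg at hge
              have e1 : PhiInv (α * sb) = 0 := by
                rw [PhiInv_eq]
                exact ng.quant_eq_zero_of_one_le hge
              have e2 : PhiInv (α * (1 - sb)) = 0 := by
                rw [PhiInv_eq]
                exact ng.quant_eq_zero_of_nonpos (by nlinarith)
              have : gfun α sb = 0 := by rw [gfun, e1, e2, sub_zero]
              rw [hgfun] at this
              linarith
            have hαsα : α ≤ α * sb := le_mul_of_one_le_right hα0.le hs1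
            rw [ht1, hTp, tQuantile_eq]
            exact nt.quant_strictMono (by linarith) (by linarith) (by linarith)
      have h3 : w * σh * t1 < w * σh * Tp := (mul_lt_mul_iff_right₀ hws).mpr ht1lt
      have h4 : w * σh * Tp ≤ w * σh * |Tp| :=
        mul_le_mul_of_nonneg_left (le_abs_self Tp) hws.le
      have h5 : βh ≤ max βh 0 := le_max_left _ _
      linarith
  -- Claim 2
  have claim2 : min βh 0 - w * σh * |Tm| ≤ βlow := by
    rcases le_or_gt 0 βlow with hb | hb
    · have h1 : min βh 0 ≤ 0 := min_le_right _ _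
      have h2 : 0 ≤ w * σh * |Tm| := by positivity
      linarith
    · set xl : ℝ := 2 * w * σt * βlow / τ2 with hxl
      have hxlneg : xl < 0 := by
        rw [hxl]
        apply div_neg_of_neg_of_pos _ hτ2
        have h2 : 0 < 2 * w * σt := by positivity
        exact mul_neg_of_pos_of_neg h2 hb
      set sl : ℝ := gInv α xl with hsl
      have hgfun : gfun α sl = xl := by
        rw [hsl, gInv]
        obtain ⟨s, _, hs⟩ := gfun_surj hα0 hα2 xl
        exact Function.invFun_eq ⟨s, hs⟩
      set t2 : ℝ := tQuantile q (α * (1 - sl)) with ht2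
      have hbeq : βlow = βh + w * σh * t2 := by
        rw [ht2, hsl, hxl]
        linarith [hlo]
      have ht2ge : Tm ≤ t2 := by
        rcases le_or_gt 1 sl with hs1 | hs1
        · have hp : α * (1 - sl) ≤ 0 := mul_nonpos_of_nonneg_of_nonpos hα0.le (by linarith)
          rw [ht2, tQuantile_eq, nt.quant_eq_zero_of_nonpos hp]
          exact hTmle
        · rcases lt_or_ge 0 sl with hs0 | hs0
          · -- sl ∈ (0,1): show sl < 1/2
            have hhalf : sl < 1/2 := by
              by_contra hle
              push_neg at hle
              have hm : α * (1 - sl) ≤ α * sl :=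
                mul_le_mul_of_nonneg_left (by linarith) hα0.le
              have hql : quant (gaussianPDFReal 0 1) (α * (1 - sl))
                  ≤ quant (gaussianPDFReal 0 1) (α * sl) :=
                ng.quant_mono (by nlinarith) (by nlinarith) hm
              have hg0 : 0 ≤ gfun α sl := by
                rw [gfun, PhiInv_eq]
                linarith
              rw [hgfun] at hg0
              linarith
            have hgt : α / 2 < α * (1 - sl) := by nlinarith
            have hlt : α * (1 - sl) < 1 := by nlinarith
            rw [ht2, hTm, tQuantile_eq]
            exact nt.quant_mono (by linarith) (by linarith) (by linarith)
          · -- sl ≤ 0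
            have hlt1 : α * (1 - sl) < 1 := by
              by_contra hge
              push_neg at hge
              have e1 : PhiInv (α * (1 - sl)) = 0 := by
                rw [PhiInv_eq]
                exact ng.quant_eq_zero_of_one_le hge
              have e2 : PhiInv (α * sl) = 0 := by
                rw [PhiInv_eq]
                exact ng.quant_eq_zero_of_nonpos (mul_nonpos_of_nonneg_of_nonpos hα0.le hs0)
              have : gfun α sl = 0 := by rw [gfun, e1, e2, sub_zero]
              rw [hgfun] at this
              linarith
            have hge : α ≤ α * (1 - sl) := le_mul_of_one_le_right hα0.le (by linarith)
            rw [ht2, hTm, tQuantile_eq]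
            exact nt.quant_mono (by linarith) (by linarith) (by linarith)
      have h3 : w * σh * Tm ≤ w * σh * t2 := mul_le_mul_of_nonneg_left ht2ge hws.le
      have h4 : -(w * σh * |Tm|) ≤ w * σh * Tm := by
        have := neg_abs_le Tm
        nlinarith [hws.le]
      have h5 : min βh 0 ≤ βh := min_le_left _ _
      linarith
  have habs : max βh 0 - min βh 0 = |βh| := by
    rcases le_total βh 0 with h | h
    · rw [max_eq_right h, min_eq_left h, abs_of_nonpos h]
      ring
    · rw [max_eq_left h, min_eq_right h, abs_of_nonneg h]
      ring
  have hfin : βbar - βlow < |βh| + w * σh * (|Tm| + |Tp|) := by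
    have := claim1
    have := claim2
    nlinarith [mul_nonneg hws.le (abs_nonneg Tm), mul_nonneg hws.le (abs_nonneg Tp)]
  calc βbar - βlow < |βh| + w * σh * (|Tm| + |Tp|) := hfin
    _ = |βh| + w * σh * (|tQuantile q (α / 2)| + |tQuantile q (1 - α / 2)|) := by
        rw [hTm, hTp]
end

section
/- In the diagonal-covariance model, with q_i(θ) = y_i²/(λ_iτ² + σ²) − log((λ_iτ₀² + σ₀²)/(λ_iτ² + σ²)) for θ = (τ², σ²) in a compact set Θ ⊂ [0,∞) × (0,∞) with ε = min_Θ σ² > 0, the Lipschitz bound |q_i(θ) − q_i(θ′)| ≤ g(y_i, λ_i)·||θ − θ′|| holds for all θ, θ′ ∈ Θ, where g(y_i, λ_i) = (1 + y_i²/ε)(λ_i + 1)/ε. -/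
open MeasureTheory ProbabilityTheory Real Set Matrix

noncomputable section

/-- `q_i(θ)`: minus twice the contribution of `y_i` to the log-likelihood (plus a
constant) in the diagonal-covariance model, with true parameter `(τ₀², σ₀²)` and
`θ = (τ², σ²)`. -/
def qContrib (τ0 σ0 : ℝ) (lam : ℝ) (θ : ℝ × ℝ) (yi : ℝ) : ℝ :=
  yi ^ 2 / (lam * θ.1 + θ.2) - Real.log ((lam * τ0 + σ0) / (lam * θ.1 + θ.2))

/-- `Q_n(θ) = (1/n) ∑ q_i(θ)`. -/
def Qobj {n : ℕ} (τ0 σ0 : ℝ) (lam : Fin n → ℝ) (yv : Fin n → ℝ) (θ : ℝ × ℝ) : ℝ :=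
  (∑ i, qContrib τ0 σ0 (lam i) θ (yv i)) / n

/-- The limiting population objective `Q₀(θ)`. -/
def Qlim (F0 : Measure ℝ) (τ0 σ0 : ℝ) (θ : ℝ × ℝ) : ℝ :=
  ∫ lam, ((lam * τ0 + σ0) / (lam * θ.1 + θ.2)
      - Real.log ((lam * τ0 + σ0) / (lam * θ.1 + θ.2))) ∂F0

end

open MeasureTheory ProbabilityTheory Real Set Matrix Filter

lemma log_lip {e a b : ℝ} (he : 0 < e) (ha : e ≤ a) (hb : e ≤ b) :
    |Real.log a - Real.log b| ≤ |a - b| / e := by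
  wlog h : b ≤ a generalizing a b
  · rw [abs_sub_comm, abs_sub_comm a b]; exact this hb ha (le_of_not_ge h)
  have ha0 : 0 < a := he.trans_le ha
  have hb0 : 0 < b := he.trans_le hb
  have h1 : Real.log a - Real.log b = Real.log (a / b) := (Real.log_div ha0.ne' hb0.ne').symm
  have h2 : Real.log (a / b) ≤ a / b - 1 := Real.log_le_sub_one_of_pos (by positivity)
  have h3 : 0 ≤ Real.log a - Real.log b := by
    rw [h1]; exact Real.log_nonneg ((one_le_div hb0).mpr h)
  rw [abs_of_nonneg h3, abs_of_nonneg (by linarith)]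
  have h4 : a / b - 1 = (a - b) / b := by field_simp
  have h5 : (a - b) / b ≤ (a - b) / e := by gcongr
  linarith [h1 ▸ h2]

lemma inv_lip {e a b : ℝ} (he : 0 < e) (ha : e ≤ a) (hb : e ≤ b) :
    |1 / a - 1 / b| ≤ |a - b| / e ^ 2 := by
  have ha0 : 0 < a := he.trans_le ha
  have hb0 : 0 < b := he.trans_le hb
  have h1 : 1 / a - 1 / b = (b - a) / (a * b) := by field_simp
  rw [h1, abs_div, abs_of_pos (mul_pos ha0 hb0), abs_sub_comm]
  gcongr
  nlinarith

/-- The Lipschitz bound `|q_i(θ) − q_i(θ′)| ≤ (1 + y²/ε)(λ + 1)/ε ⬝ ‖θ − θ′‖` on the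
compact set `Θ`, where `ε = min_Θ σ²` and `‖·‖` is the Euclidean norm on `ℝ²`. -/
theorem qContrib_lipschitz
    (τ0 σ0 : ℝ) (hτ0 : 0 ≤ τ0) (hσ0 : 0 < σ0)
    (Θ : Set (ℝ × ℝ)) (hΘc : IsCompact Θ) (hΘne : Θ.Nonempty)
    (hΘsub : Θ ⊆ Set.Ici 0 ×ˢ Set.Ioi 0)
    (ε : ℝ) (hε : ε = sInf (Prod.snd '' Θ)) (hεpos : 0 < ε)
    (lam : ℝ) (hlam : 0 < lam) (yi : ℝ) :
    ∀ θ ∈ Θ, ∀ θ' ∈ Θ,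
      |qContrib τ0 σ0 lam θ yi - qContrib τ0 σ0 lam θ' yi| ≤
        (1 + yi ^ 2 / ε) * (lam + 1) / ε *
          Real.sqrt ((θ.1 - θ'.1) ^ 2 + (θ.2 - θ'.2) ^ 2) := by
  intro θ hθ θ' hθ'
  have hθ1 : 0 ≤ θ.1 := (hΘsub hθ).1
  have hθ'1 : 0 ≤ θ'.1 := (hΘsub hθ').1
  have hbdd : BddBelow (Prod.snd '' Θ) := ⟨0, fun x ⟨p, hp, hpx⟩ => hpx ▸ le_of_lt (hΘsub hp).2⟩
  have hθ2 : ε ≤ θ.2 := hε ▸ csInf_le hbdd ⟨θ, hθ, rfl⟩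
  have hθ'2 : ε ≤ θ'.2 := hε ▸ csInf_le hbdd ⟨θ', hθ', rfl⟩
  set v : ℝ := lam * θ.1 + θ.2 with hvdef
  set v' : ℝ := lam * θ'.1 + θ'.2 with hv'def
  have hv : ε ≤ v := by nlinarith
  have hv' : ε ≤ v' := by nlinarith
  have hv0 : 0 < v := hεpos.trans_le hv
  have hv'0 : 0 < v' := hεpos.trans_le hv'
  have hc : 0 < lam * τ0 + σ0 := by nlinarith
  have hq : qContrib τ0 σ0 lam θ yi - qContrib τ0 σ0 lam θ' yi
      = yi ^ 2 * (1 / v - 1 / v') + (Real.log v - Real.log v') := by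
    simp only [qContrib]
    rw [← hvdef, ← hv'def]
    rw [Real.log_div hc.ne' hv0.ne', Real.log_div hc.ne' hv'0.ne']
    field_simp
    ring
  have hS : |v - v'| ≤ (lam + 1) * Real.sqrt ((θ.1 - θ'.1) ^ 2 + (θ.2 - θ'.2) ^ 2) := by
    have h1 : |θ.1 - θ'.1| ≤ Real.sqrt ((θ.1 - θ'.1) ^ 2 + (θ.2 - θ'.2) ^ 2) := by
      rw [← Real.sqrt_sq_eq_abs]
      exact Real.sqrt_le_sqrt (by nlinarith)
    have h2 : |θ.2 - θ'.2| ≤ Real.sqrt ((θ.1 - θ'.1) ^ 2 + (θ.2 - θ'.2) ^ 2) := by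
      rw [← Real.sqrt_sq_eq_abs]
      exact Real.sqrt_le_sqrt (by nlinarith)
    have h3 : v - v' = lam * (θ.1 - θ'.1) + (θ.2 - θ'.2) := by rw [hvdef, hv'def]; ring
    calc |v - v'| ≤ lam * |θ.1 - θ'.1| + |θ.2 - θ'.2| := by
          rw [h3]
          refine (abs_add_le _ _).trans ?_
          rw [abs_mul, abs_of_pos hlam]
      _ ≤ (lam + 1) * Real.sqrt ((θ.1 - θ'.1) ^ 2 + (θ.2 - θ'.2) ^ 2) := by nlinarith
  have hinv := inv_lip hεpos hv hv'
  have hlog := log_lip hεpos hv hv'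
  have key : |qContrib τ0 σ0 lam θ yi - qContrib τ0 σ0 lam θ' yi|
      ≤ (1 + yi ^ 2 / ε) / ε * |v - v'| := by
    rw [hq]
    calc |yi ^ 2 * (1 / v - 1 / v') + (Real.log v - Real.log v')|
        ≤ yi ^ 2 * |1 / v - 1 / v'| + |Real.log v - Real.log v'| := by
          refine (abs_add_le _ _).trans ?_
          rw [abs_mul, abs_of_nonneg (sq_nonneg yi)]
      _ ≤ yi ^ 2 * (|v - v'| / ε ^ 2) + |v - v'| / ε := by
          gcongr
      _ = (1 + yi ^ 2 / ε) / ε * |v - v'| := by field_simp; ring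
  calc |qContrib τ0 σ0 lam θ yi - qContrib τ0 σ0 lam θ' yi|
      ≤ (1 + yi ^ 2 / ε) / ε * |v - v'| := key
    _ ≤ (1 + yi ^ 2 / ε) / ε * ((lam + 1) * Real.sqrt ((θ.1 - θ'.1) ^ 2 + (θ.2 - θ'.2) ^ 2)) := by
        gcongr
    _ = (1 + yi ^ 2 / ε) * (lam + 1) / ε * Real.sqrt ((θ.1 - θ'.1) ^ 2 + (θ.2 - θ'.2) ^ 2) := by
        ring
end
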